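/- Let p be an odd prime, let n ≥ 1, and let a₁, a₂, …, a_n be positive integers with T := a₁ + a₂ + ⋯ + a_n ≤ 2(p−1). Consider the rational number S := Σ_{j=0}^{p−1} [ Π_{i=1}^{n} (j+1)_{a_i} ] · [ 1 + j · Σ_{i=1}^{n} ( H^{(1)}_{a_i + j} − H^{(1)}_{j} ) ]. Viewed in ℚ_p, S ∈ pℤ_p if T < 2(p−1), and S − 1 ∈ pℤ_p if T = 2(p−1). -/

import Mathlib

/-- The generalized harmonic sum `H⁽ⁱ⁾_n = ∑_{j=1}^{n} 1/jⁱ`. -/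
def harmonic' (i n : ℕ) : ℚ := ∑ j ∈ Finset.Icc 1 n, 1 / (j : ℚ) ^ i

/-- The rising factorial `(a)ₖ = a(a+1)⋯(a+k-1)` in `ℚ`. -/
def risingFacQ (a : ℚ) (k : ℕ) : ℚ := ∏ t ∈ Finset.range k, (a + t)

open Polynomial Finset

theorem auxSumRange {p : ℕ} [NeZero p] {M : Type*} [AddCommMonoid M] (f : ZMod p → M) :
    ∑ j ∈ Finset.range p, f (j : ZMod p) = ∑ x : ZMod p, f x := by
  refine Finset.sum_bij' (fun j _ => ((j : ZMod p))) (fun x _ => x.val) ?_ ?_ ?_ ?_ ?_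
  · intro x _; exact Finset.mem_univ _
  · intro x _; exact Finset.mem_range.mpr (ZMod.val_lt _)
  · intro j hj; exact ZMod.val_cast_of_lt (Finset.mem_range.mp hj)
  · intro x _; exact ZMod.natCast_zmod_val x
  · intro j hj; rfl

theorem auxZmodSumPow (p : ℕ) [hp : Fact p.Prime] (m : ℕ) :
    ∑ x : ZMod p, x ^ m = if m ≠ 0 ∧ (p - 1) ∣ m then -1 else 0 := by
  have hcard : Fintype.card (ZMod p) = p := ZMod.card p
  by_cases hm : m = 0
  · subst hm
    simp only [pow_zero, sum_const, card_univ, hcard, nsmul_one, ne_eq, not_true_eq_false,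
      false_and, if_false]
    exact ZMod.natCast_self p
  · classical
    have key : ∑ x : ZMod p, x ^ m = ∑ x : (ZMod p)ˣ, (x : ZMod p) ^ m := by
      let φ : (ZMod p)ˣ ↪ ZMod p := ⟨fun x ↦ x, fun _ _ h => Units.ext h⟩
      have huniv : univ.map φ = univ \ {0} := by
        ext x
        simp only [mem_map, mem_univ, Function.Embedding.coeFn_mk, true_and, mem_sdiff,
          mem_singleton, φ]
        exact ⟨fun ⟨u, hu⟩ => hu ▸ u.ne_zero, fun h => ⟨Units.mk0 x h, rfl⟩⟩
      calc
        ∑ x : ZMod p, x ^ m = ∑ x ∈ univ \ {(0 : ZMod p)}, x ^ m := by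
          rw [← sum_sdiff ({0} : Finset (ZMod p)).subset_univ, sum_singleton, zero_pow hm,
            add_zero]
        _ = ∑ x : (ZMod p)ˣ, (x : ZMod p) ^ m := by simp [φ, ← huniv, univ.sum_map φ]; rfl
    rw [key]
    have := FiniteField.sum_pow_units (ZMod p) m
    rw [hcard] at this
    rw [this]
    simp [hm]

theorem auxHarmonicDiff (a j : ℕ) :
    harmonic' 1 (a + j) - harmonic' 1 j = ∑ t ∈ Finset.range a, (1:ℚ)/((j:ℚ) + t + 1) := by
  unfold harmonic'
  have h1 : ∀ n : ℕ, Finset.Icc 1 n = Finset.Ico 1 (n+1) := fun n => by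
    rw [Finset.Ico_add_one_right_eq_Icc]
  rw [h1, h1, sub_eq_iff_eq_add', ← Finset.sum_Ico_consecutive
    (fun k : ℕ => 1/(k:ℚ)^1) (Nat.le_add_left 1 j) (by omega : j + 1 ≤ a + j + 1),
    Finset.sum_Ico_eq_sum_range, Finset.sum_Ico_eq_sum_range]
  have h2 : a + j + 1 - (j + 1) = a := by omega
  rw [h2]
  congr 1
  apply Finset.sum_congr rfl
  intro t _
  push_cast
  ring

theorem auxDerivProd {R ι : Type*} [CommSemiring R] [DecidableEq ι] (s : Finset ι)
    (f : ι → R[X]) :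
    derivative (∏ i ∈ s, f i) = ∑ i ∈ s, (∏ j ∈ s.erase i, f j) * derivative (f i) := by
  rw [Finset.prod_eq_multiset_prod, Polynomial.derivative_prod, Finset.sum_eq_multiset_sum]
  congr 1


/-- The polynomial `G(x) = x ∏ᵢ∏_{t<aᵢ} (x + t + 1)` over `ℤ`. -/
noncomputable def Gpoly (n : ℕ) (a : Fin n → ℕ) : ℤ[X] :=
  X * ∏ q ∈ Finset.univ.sigma (fun i : Fin n => Finset.range (a i)),
    (X + C ((q.2 : ℤ) + 1))

theorem Gpoly_monic (n : ℕ) (a : Fin n → ℕ) : (Gpoly n a).Monic := by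
  exact (monic_X).mul (monic_prod_of_monic _ _ (fun q _ => monic_X_add_C _))

theorem Gpoly_natDegree (n : ℕ) (a : Fin n → ℕ) :
    (Gpoly n a).natDegree = 1 + ∑ i, a i := by
  unfold Gpoly
  rw [natDegree_mul (X_ne_zero) ((monic_prod_of_monic _ _
    (fun q _ => monic_X_add_C _)).ne_zero), natDegree_X,
    natDegree_prod_of_monic _ _ (fun q _ => monic_X_add_C _)]
  congr 1
  rw [Finset.sum_congr rfl (fun q _ => natDegree_X_add_C ((q.2 : ℤ) + 1)),
    Finset.sum_const, smul_eq_mul, mul_one, Finset.card_sigma]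
  simp

theorem Gpoly_eval (n : ℕ) (a : Fin n → ℕ) (j : ℕ) :
    (((derivative (Gpoly n a)).eval (j : ℤ) : ℤ) : ℚ) =
      (∏ i, risingFacQ ((j : ℚ) + 1) (a i)) *
        (1 + (j : ℚ) * ∑ i, (harmonic' 1 (a i + j) - harmonic' 1 j)) := by
  classical
  set σS : Finset ((_ : Fin n) × ℕ) := Finset.univ.sigma (fun i : Fin n => Finset.range (a i))
    with hσS
  set Pq : ℚ[X] := ∏ q ∈ σS, (X + C ((q.2 : ℚ) + 1)) with hPq
  have hmap : (Gpoly n a).map (Int.castRingHom ℚ) = X * Pq := by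
    unfold Gpoly
    rw [Polynomial.map_mul, Polynomial.map_X, Polynomial.map_prod]
    congr 1
    apply Finset.prod_congr rfl
    intro q _
    rw [Polynomial.map_add, Polynomial.map_X, Polynomial.map_C]
    congr 1
    simp
  have step1 : (((derivative (Gpoly n a)).eval (j : ℤ) : ℤ) : ℚ)
      = (derivative (X * Pq)).eval ((j : ℚ)) := by
    rw [← hmap, derivative_map]
    have := Polynomial.eval_intCast_map (Int.castRingHom ℚ) (derivative (Gpoly n a)) (j : ℤ)
    simp only [eq_intCast, Int.cast_natCast] at this
    rw [this]
  rw [step1]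
  -- expand the derivative
  rw [derivative_mul, derivative_X, one_mul, auxDerivProd]
  simp only [derivative_add, derivative_X, derivative_C, add_zero, mul_one]
  rw [eval_add, eval_mul, eval_X, eval_finset_sum]
  simp only [eval_prod, eval_add, eval_X, eval_C]
  set e : ((_ : Fin n) × ℕ) → ℚ := fun q => (j : ℚ) + ((q.2 : ℚ) + 1) with he
  have hepos : ∀ q, e q ≠ 0 := by
    intro q
    have : (0:ℚ) < (j : ℚ) + ((q.2 : ℚ) + 1) := by positivity
    exact ne_of_gt this
  have hPev : ∏ i, risingFacQ ((j : ℚ) + 1) (a i) = ∏ q ∈ σS, e q := by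
    unfold risingFacQ
    rw [hσS, Finset.prod_sigma']
    apply Finset.prod_congr rfl
    intro q _
    simp only [he]
    ring
  have hH : ∑ i, (harmonic' 1 (a i + j) - harmonic' 1 j) = ∑ q ∈ σS, 1 / e q := by
    have h1 : (∑ i, (harmonic' 1 (a i + j) - harmonic' 1 j))
        = ∑ i, ∑ t ∈ Finset.range (a i), (1:ℚ)/((j:ℚ) + t + 1) :=
      Finset.sum_congr rfl fun i _ => auxHarmonicDiff (a i) j
    rw [h1, hσS, Finset.sum_sigma']
    apply Finset.sum_congr rfl
    intro q _
    simp only [he]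
    ring_nf
  rw [hPev, hH]
  have hterm : ∀ q ∈ σS, (∏ r ∈ σS, e r) * (1 / e q) = ∏ r ∈ σS.erase q, e r := by
    intro q hq
    rw [← Finset.mul_prod_erase σS e hq]
    field_simp
    exact mul_div_cancel_left₀ _ (hepos q)
  rw [mul_add, mul_one, mul_left_comm]
  congr 1
  · rw [hPq, eval_prod]
    apply Finset.prod_congr rfl
    intro q _
    simp [he]
  · congr 1
    rw [Finset.mul_sum]
    exact Finset.sum_congr rfl fun q hq => (hterm q hq).symm

/-- Lemma 3.10: for an odd prime `p` and positive integers `a₁, …, a_n` with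
`T = a₁ + ⋯ + a_n ≤ 2(p-1)`, the sum
`∑_{j=0}^{p-1} [∏ᵢ (j+1)_{aᵢ}] [1 + j ∑ᵢ (H⁽¹⁾_{aᵢ+j} - H⁽¹⁾_j)]`
is `≡ 0 (mod p)` if `T < 2(p-1)` and `≡ 1 (mod p)` if `T = 2(p-1)`. -/
theorem stmt4 (p : ℕ) [hp : Fact p.Prime] (hodd : p ≠ 2)
    (n : ℕ) (hn : 1 ≤ n) (a : Fin n → ℕ) (ha : ∀ i, 0 < a i)
    (hT : ∑ i, a i ≤ 2 * (p - 1))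
    (S : ℚ)
    (hS : S = ∑ j ∈ Finset.range p,
        (∏ i, risingFacQ ((j : ℚ) + 1) (a i)) *
          (1 + (j : ℚ) * ∑ i, (harmonic' 1 (a i + j) - harmonic' 1 j))) :
    (∑ i, a i < 2 * (p - 1) → ∃ z : ℤ_[p], (S : ℚ_[p]) = (p : ℚ_[p]) * (z : ℚ_[p])) ∧
    (∑ i, a i = 2 * (p - 1) → ∃ z : ℤ_[p], (S : ℚ_[p]) - 1 = (p : ℚ_[p]) * (z : ℚ_[p])) := by
  classical
  haveI : NeZero p := ⟨hp.out.ne_zero⟩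
  have hp3 : 3 ≤ p := by
    have h2 := hp.out.two_le
    omega
  set T := ∑ i, a i with hTdef
  set G : ℤ[X] := Gpoly n a with hG
  set N : ℤ := ∑ j ∈ Finset.range p, (derivative G).eval (j : ℤ) with hN
  have hSN : S = (N : ℚ) := by
    rw [hS, hN, Int.cast_sum]
    exact Finset.sum_congr rfl fun j _ => (Gpoly_eval n a j).symm
  -- computation of N mod p
  set M : ℕ := 2 * (p - 1) + 1 with hM
  set f : ℤ →+* ZMod p := Int.castRingHom (ZMod p) with hf
  set Gb : (ZMod p)[X] := G.map f with hGb
  have hdeg : (derivative Gb).natDegree < M := by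
    have h1 : (derivative Gb).natDegree ≤ Gb.natDegree - 1 := natDegree_derivative_le _
    have h2 : Gb.natDegree ≤ G.natDegree := natDegree_map_le
    have h3 : G.natDegree = 1 + T := Gpoly_natDegree n a
    omega
  have hNmod : (N : ZMod p) =
      ∑ m ∈ Finset.range M, (derivative Gb).coeff m * ∑ x : ZMod p, x ^ m := by
    rw [hN]
    push_cast
    have e1 : ∀ j : ℕ, (((derivative G).eval (j : ℤ) : ℤ) : ZMod p)
        = (derivative Gb).eval ((j : ZMod p)) := by
      intro j
      rw [hGb, derivative_map]
      have := Polynomial.eval_intCast_map f (derivative G) (j : ℤ)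
      simp only [hf, eq_intCast, Int.cast_natCast] at this ⊢
      rw [this]
    rw [Finset.sum_congr rfl fun j _ => e1 j,
      auxSumRange (fun x => (derivative Gb).eval x)]
    have e2 : ∀ x : ZMod p, (derivative Gb).eval x
        = ∑ m ∈ Finset.range M, (derivative Gb).coeff m * x ^ m := fun x =>
      Polynomial.eval_eq_sum_range' hdeg x
    rw [Finset.sum_congr rfl fun x _ => e2 x, Finset.sum_comm]
    exact Finset.sum_congr rfl fun m _ => (Finset.mul_sum _ _ _).symm
  have hNmod2 : (N : ZMod p) =
      (derivative Gb).coeff (p - 1) * (-1) + (derivative Gb).coeff (2 * (p - 1)) * (-1) := by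
    rw [hNmod, Finset.sum_congr rfl fun m _ => by rw [auxZmodSumPow p m]]
    have hsub : ({p - 1, 2 * (p - 1)} : Finset ℕ) ⊆ Finset.range M := by
      intro m hm
      simp only [Finset.mem_insert, Finset.mem_singleton] at hm
      rcases hm with h | h <;> simp [Finset.mem_range, h, hM] <;> omega
    have hzero : ∀ m ∈ Finset.range M, m ∉ ({p - 1, 2 * (p - 1)} : Finset ℕ) →
        (derivative Gb).coeff m * (if m ≠ 0 ∧ (p - 1) ∣ m then (-1 : ZMod p) else 0) = 0 := by
      intro m hm hnot
      simp only [Finset.mem_insert, Finset.mem_singleton, not_or] at hnot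
      rw [Finset.mem_range] at hm
      have hcond : ¬(m ≠ 0 ∧ (p - 1) ∣ m) := by
        rintro ⟨h0, k, hk⟩
        have hk2 : k ≤ 2 := by
          by_contra hk3
          push_neg at hk3
          have : (p - 1) * 3 ≤ (p - 1) * k := Nat.mul_le_mul_left _ hk3
          omega
        interval_cases k <;> omega
      rw [if_neg hcond, mul_zero]
    rw [← Finset.sum_subset hsub hzero,
      Finset.sum_pair (by omega : p - 1 ≠ 2 * (p - 1))]
    congr 1
    · congr 1
      rw [if_pos ⟨by omega, dvd_refl _⟩]
    · congr 1
      rw [if_pos ⟨by omega, ⟨2, by ring⟩⟩]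
  have hc1 : (derivative Gb).coeff (p - 1) = 0 := by
    rw [coeff_derivative]
    have : ((p - 1 : ℕ) : ZMod p) + 1 = 0 := by
      have : ((p - 1 : ℕ) : ZMod p) = (p : ZMod p) - 1 := by
        push_cast [Nat.cast_sub (by omega : 1 ≤ p)]
        ring
      rw [this, ZMod.natCast_self]
      ring
    rw [this, mul_zero]
  have hc2cast : ((2 * (p - 1) : ℕ) : ZMod p) + 1 = -1 := by
    have : ((2 * (p - 1) : ℕ) : ZMod p) = 2 * ((p : ZMod p) - 1) := by
      push_cast [Nat.cast_sub (by omega : 1 ≤ p)]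
      ring
    rw [this, ZMod.natCast_self]
    ring
  have hc2 : (derivative Gb).coeff (2 * (p - 1))
      = ((G.coeff (2 * (p - 1) + 1) : ℤ) : ZMod p) * (-1) := by
    rw [coeff_derivative, hc2cast, hGb, coeff_map, hf]
    simp
  constructor
  · intro hTlt
    have hzmod : (N : ZMod p) = 0 := by
      rw [hNmod2, hc1, hc2, coeff_eq_zero_of_natDegree_lt]
      · ring
      · rw [Gpoly_natDegree n a]
        omega
    have hdvd : (p : ℤ) ∣ N := (ZMod.intCast_zmod_eq_zero_iff_dvd N p).mp hzmod
    obtain ⟨K, hK⟩ := hdvd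
    refine ⟨(K : ℤ_[p]), ?_⟩
    rw [hSN, hK]
    push_cast
    ring
  · intro hTeq
    have hzmod : (N : ZMod p) = 1 := by
      have hco : G.coeff (2 * (p - 1) + 1) = 1 := by
        have hd : G.natDegree = 2 * (p - 1) + 1 := by
          rw [Gpoly_natDegree n a]; omega
        rw [← hd]
        exact (Gpoly_monic n a).coeff_natDegree
      rw [hNmod2, hc1, hc2, hco]
      push_cast
      ring
    have hdvd : (p : ℤ) ∣ (N - 1) := by
      apply (ZMod.intCast_zmod_eq_zero_iff_dvd (N - 1) p).mp
      push_cast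
      rw [hzmod]
      ring
    obtain ⟨K, hK⟩ := hdvd
    refine ⟨(K : ℤ_[p]), ?_⟩
    have : (N : ℤ) = p * K + 1 := by omega
    rw [hSN, this]
    push_cast
    ring
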